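/- arXiv:math/9903038 — 2 statements merged into one kernel-verified Lean document; each statement's English description precedes it below -/
import Mathlib

section
/- Let M be a cocommutative bialgebra over R with an R-valued bicharacter r. Define R(a⊗b) = Σ a'⊗b' r(a''⊗b''). Then R is an R-matrix for the bialgebra M viewed as a ring: it is compatible with 1, compatible with multiplication, and satisfies the Yang-Baxter equation R₁₂R₁₃R₂₃ = R₂₃R₁₃R₁₂. -/
open TensorProduct Coalgebra

/-- An `R`-valued bicharacter of a bialgebra `M` over `R`. -/
structure Bicharacter (R M : Type) [CommRing R] [Ring M] [Bialgebra R M] where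
  toFun : M →ₗ[R] M →ₗ[R] R
  one_left : ∀ a : M, toFun 1 a = counit (R := R) a
  one_right : ∀ a : M, toFun a 1 = counit (R := R) a
  mul_left : ∀ (a b c : M) (ι : Type) (t : Finset ι) (c₁ c₂ : ι → M),
    comul (R := R) c = ∑ i ∈ t, c₁ i ⊗ₜ[R] c₂ i →
    toFun (a * b) c = ∑ i ∈ t, toFun a (c₁ i) * toFun b (c₂ i)
  mul_right : ∀ (a b c : M) (ι : Type) (t : Finset ι) (a₁ a₂ : ι → M),
    comul (R := R) a = ∑ i ∈ t, a₁ i ⊗ₜ[R] a₂ i →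
    toFun a (b * c) = ∑ i ∈ t, toFun (a₁ i) b * toFun (a₂ i) c

section Maps

variable (R M : Type) [CommRing R] [AddCommGroup M] [Module R M]

/-- A map `M ⊗ M → M ⊗ M` acting on factors 1,2 of `M ⊗ M ⊗ M`. -/
noncomputable def map12 (f : M ⊗[R] M →ₗ[R] M ⊗[R] M) :
    M ⊗[R] (M ⊗[R] M) →ₗ[R] M ⊗[R] (M ⊗[R] M) :=
  (TensorProduct.assoc R M M M).toLinearMap ∘ₗ f.rTensor M ∘ₗ
    (TensorProduct.assoc R M M M).symm.toLinearMap

/-- A map `M ⊗ M → M ⊗ M` acting on factors 2,3 of `M ⊗ M ⊗ M`. -/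
noncomputable def map23 (f : M ⊗[R] M →ₗ[R] M ⊗[R] M) :
    M ⊗[R] (M ⊗[R] M) →ₗ[R] M ⊗[R] (M ⊗[R] M) :=
  f.lTensor M

/-- The map exchanging factors 2,3 of `M ⊗ M ⊗ M`. -/
noncomputable def swap23 : M ⊗[R] (M ⊗[R] M) →ₗ[R] M ⊗[R] (M ⊗[R] M) :=
  (TensorProduct.comm R M M).toLinearMap.lTensor M

/-- A map `M ⊗ M → M ⊗ M` acting on factors 1,3 of `M ⊗ M ⊗ M`. -/
noncomputable def map13 (f : M ⊗[R] M →ₗ[R] M ⊗[R] M) :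
    M ⊗[R] (M ⊗[R] M) →ₗ[R] M ⊗[R] (M ⊗[R] M) :=
  swap23 R M ∘ₗ map12 R M f ∘ₗ swap23 R M

/-- A multiplication `M ⊗ M → M` applied to factors 1,2 of `M ⊗ M ⊗ M`. -/
noncomputable def mul12 (m : M ⊗[R] M →ₗ[R] M) :
    M ⊗[R] (M ⊗[R] M) →ₗ[R] M ⊗[R] M :=
  m.rTensor M ∘ₗ (TensorProduct.assoc R M M M).symm.toLinearMap

/-- A multiplication `M ⊗ M → M` applied to factors 2,3 of `M ⊗ M ⊗ M`. -/
noncomputable def mul23 (m : M ⊗[R] M →ₗ[R] M) :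
    M ⊗[R] (M ⊗[R] M) →ₗ[R] M ⊗[R] M :=
  m.lTensor M

end Maps


section Helpers

variable (R M : Type) [CommRing R] [Ring M] [Bialgebra R M]
variable {N : Type} [AddCommGroup N] [Module R N]

/-- A chosen finite representation of `comul x`. -/
noncomputable def rep (x : M) : Finset (M × M) :=
  (TensorProduct.exists_finset (comul (R := R) x)).choose

lemma rep_spec (x : M) :
    comul (R := R) x = ∑ p ∈ rep R M x, p.1 ⊗ₜ[R] p.2 :=
  (TensorProduct.exists_finset (comul (R := R) x)).choose_spec

variable {R M}

/-- A trilinear map gadget. -/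
noncomputable def tri (φ ψ : M →ₗ[R] R) (w : M →ₗ[R] N) :
    M →ₗ[R] M →ₗ[R] M →ₗ[R] N where
  toFun x :=
    { toFun := fun y =>
        { toFun := fun z => (φ y * ψ z) • w x
          map_add' := fun z₁ z₂ => by simp [mul_add, add_smul]
          map_smul' := fun c z => by
            simp only [map_smul, smul_eq_mul, RingHom.id_apply]
            rw [← smul_smul, ← smul_smul]
            rw [smul_comm (φ y) c, smul_smul, smul_smul, smul_smul, mul_assoc] }
      map_add' := fun y₁ y₂ => by
        ext z; simp [add_mul, add_smul]
      map_smul' := fun c y => by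
        ext z; simp [smul_smul, mul_assoc] }
  map_add' x₁ x₂ := by ext y z; simp
  map_smul' c x := by ext y z; simp [smul_comm c]

@[simp] lemma tri_apply (φ ψ : M →ₗ[R] R) (w : M →ₗ[R] N) (x y z : M) :
    tri φ ψ w x y z = (φ y * ψ z) • w x := rfl

/-- Lift a trilinear map to `M ⊗ (M ⊗ M)`. -/
noncomputable def lift₃ (F : M →ₗ[R] M →ₗ[R] M →ₗ[R] N) :
    M ⊗[R] (M ⊗[R] M) →ₗ[R] N :=
  TensorProduct.lift ((TensorProduct.lift.equiv (RingHom.id R) M M N).toLinearMap ∘ₗ F)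

@[simp] lemma lift₃_tmul (F : M →ₗ[R] M →ₗ[R] M →ₗ[R] N) (x y z : M) :
    lift₃ F (x ⊗ₜ[R] (y ⊗ₜ[R] z)) = F x y z := rfl

lemma ext_triple {f g : M ⊗[R] (M ⊗[R] M) →ₗ[R] N}
    (h : ∀ x y z : M, f (x ⊗ₜ[R] (y ⊗ₜ[R] z)) = g (x ⊗ₜ[R] (y ⊗ₜ[R] z))) : f = g := by
  apply TensorProduct.ext'
  intro x w
  induction w using TensorProduct.induction_on with
  | zero => simp [tmul_zero]
  | tmul y z => exact h x y z
  | add u v hu hv => rw [tmul_add, map_add, map_add, hu, hv]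

lemma rep_counit (x : M) :
    ∑ p ∈ rep R M x, counit (R := R) p.2 • p.1 = x := by
  have h := Coalgebra.lTensor_counit_comul (R := R) x
  rw [rep_spec R M x, map_sum] at h
  have := congrArg (TensorProduct.rid R M) h
  simpa [map_sum] using this

lemma coassoc_rep (a : M) :
    ∑ i ∈ rep R M a, ∑ j ∈ rep R M i.1, j.1 ⊗ₜ[R] (j.2 ⊗ₜ[R] i.2)
      = ∑ i ∈ rep R M a, ∑ j ∈ rep R M i.2, i.1 ⊗ₜ[R] (j.1 ⊗ₜ[R] j.2) := by
  have h := Coalgebra.coassoc_apply (R := R) a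
  have hl : (TensorProduct.assoc R M M M) ((LinearMap.rTensor M comul) (comul (R := R) a))
      = ∑ i ∈ rep R M a, ∑ j ∈ rep R M i.1, j.1 ⊗ₜ[R] (j.2 ⊗ₜ[R] i.2) := by
    rw [rep_spec R M a, map_sum, map_sum]
    refine Finset.sum_congr rfl fun i _ => ?_
    rw [LinearMap.rTensor_tmul, rep_spec R M i.1, TensorProduct.sum_tmul, map_sum]
    simp
  have hr : (LinearMap.lTensor M comul) (comul (R := R) a)
      = ∑ i ∈ rep R M a, ∑ j ∈ rep R M i.2, i.1 ⊗ₜ[R] (j.1 ⊗ₜ[R] j.2) := by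
    rw [rep_spec R M a, map_sum]
    refine Finset.sum_congr rfl fun i _ => ?_
    rw [LinearMap.lTensor_tmul, rep_spec R M i.2, TensorProduct.tmul_sum]
  rw [← hl, ← hr, h]

end Helpers

section Helpers2

variable {R M : Type} [CommRing R] [Ring M] [Bialgebra R M]
variable {N : Type} [AddCommGroup N] [Module R N]

@[simp] lemma swap23_tmul (x y z : M) :
    swap23 R M (x ⊗ₜ[R] (y ⊗ₜ[R] z)) = x ⊗ₜ[R] (z ⊗ₜ[R] y) := by
  simp [swap23]

lemma map23_tmul (f : M ⊗[R] M →ₗ[R] M ⊗[R] M) (x : M) (w : M ⊗[R] M) :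
    map23 R M f (x ⊗ₜ[R] w) = x ⊗ₜ[R] f w := by
  simp [map23]

lemma map12_tmul (f : M ⊗[R] M →ₗ[R] M ⊗[R] M) (x y z : M) :
    map12 R M f (x ⊗ₜ[R] (y ⊗ₜ[R] z))
      = TensorProduct.assoc R M M M (f (x ⊗ₜ[R] y) ⊗ₜ[R] z) := by
  simp [map12]

lemma map13_tmul (f : M ⊗[R] M →ₗ[R] M ⊗[R] M) (x y z : M) :
    map13 R M f (x ⊗ₜ[R] (y ⊗ₜ[R] z))
      = swap23 R M (map12 R M f (x ⊗ₜ[R] (z ⊗ₜ[R] y))) := by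
  simp [map13]

lemma mul12_tmul (m : M ⊗[R] M →ₗ[R] M) (x y z : M) :
    mul12 R M m (x ⊗ₜ[R] (y ⊗ₜ[R] z)) = m (x ⊗ₜ[R] y) ⊗ₜ[R] z := by
  simp [mul12]

lemma mul23_tmul (m : M ⊗[R] M →ₗ[R] M) (x y z : M) :
    mul23 R M m (x ⊗ₜ[R] (y ⊗ₜ[R] z)) = x ⊗ₜ[R] m (y ⊗ₜ[R] z) := by
  simp [mul23]

section cocomm

variable (hcoc : ∀ a : M, TensorProduct.comm R M M (comul (R := R) a) = comul (R := R) a)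
include hcoc

lemma cocomm_rep (x : M) :
    ∑ p ∈ rep R M x, p.1 ⊗ₜ[R] p.2 = ∑ p ∈ rep R M x, p.2 ⊗ₜ[R] p.1 := by
  have h := hcoc x
  rw [rep_spec R M x, map_sum] at h
  simpa using h.symm

lemma swapA_eq_B (a : M) :
    ∑ i ∈ rep R M a, ∑ j ∈ rep R M i.1, j.1 ⊗ₜ[R] (i.2 ⊗ₜ[R] j.2)
      = ∑ i ∈ rep R M a, ∑ j ∈ rep R M i.2, i.1 ⊗ₜ[R] (j.1 ⊗ₜ[R] j.2) := by
  have h := congrArg (swap23 R M) (coassoc_rep (R := R) (M := M) a)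
  simp only [map_sum, swap23_tmul] at h
  rw [h]
  refine Finset.sum_congr rfl fun i _ => ?_
  rw [← TensorProduct.tmul_sum, ← TensorProduct.tmul_sum, ← cocomm_rep hcoc i.2]

lemma A_swap (a : M) :
    ∑ i ∈ rep R M a, ∑ j ∈ rep R M i.1, j.1 ⊗ₜ[R] (j.2 ⊗ₜ[R] i.2)
      = ∑ i ∈ rep R M a, ∑ j ∈ rep R M i.1, j.1 ⊗ₜ[R] (i.2 ⊗ₜ[R] j.2) :=
  (coassoc_rep a).trans (swapA_eq_B hcoc a).symm

lemma sum_swap23 (F : M →ₗ[R] M →ₗ[R] M →ₗ[R] N) (x : M) :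
    ∑ i ∈ rep R M x, ∑ j ∈ rep R M i.1, F j.1 j.2 i.2
      = ∑ i ∈ rep R M x, ∑ j ∈ rep R M i.1, F j.1 i.2 j.2 := by
  have h := congrArg (lift₃ F) (A_swap hcoc x)
  simpa [map_sum] using h

lemma sum_swapA_B (F : M →ₗ[R] M →ₗ[R] M →ₗ[R] N) (x : M) :
    ∑ i ∈ rep R M x, ∑ j ∈ rep R M i.1, F j.1 i.2 j.2
      = ∑ i ∈ rep R M x, ∑ j ∈ rep R M i.2, F i.1 j.1 j.2 := by
  have h := congrArg (lift₃ F) (swapA_eq_B hcoc x)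
  simpa [map_sum] using h

end cocomm

lemma sum_coassoc (F : M →ₗ[R] M →ₗ[R] M →ₗ[R] N) (a : M) :
    ∑ i ∈ rep R M a, ∑ j ∈ rep R M i.1, F j.1 j.2 i.2
      = ∑ i ∈ rep R M a, ∑ j ∈ rep R M i.2, F i.1 j.1 j.2 := by
  have h := congrArg (lift₃ F) (coassoc_rep (R := R) (M := M) a)
  simpa [map_sum] using h

lemma rep_mul (b c : M) :
    comul (R := R) (b * c) = ∑ q ∈ rep R M b ×ˢ rep R M c,
      (q.1.1 * q.2.1) ⊗ₜ[R] (q.1.2 * q.2.2) := by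
  rw [Bialgebra.comul_mul, rep_spec R M b, rep_spec R M c, Finset.sum_mul_sum,
    Finset.sum_product]
  simp [Algebra.TensorProduct.tmul_mul_tmul]

end Helpers2

set_option maxHeartbeats 2000000 in
/-- If `M` is a cocommutative bialgebra over `R` with an `R`-valued bicharacter `r`,
then `R(a⊗b) = Σ a'⊗b' r(a''⊗b'')` is an R-matrix for `M` viewed as a ring:
it is compatible with `1` and with the multiplication, and satisfies the
Yang-Baxter equation. -/
theorem bicharacter_R_matrix (R M : Type) [CommRing R] [Ring M] [Bialgebra R M]
    (hcoc : ∀ a : M, TensorProduct.comm R M M (comul (R := R) a) = comul (R := R) a)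
    (r : Bicharacter R M)
    (ρ : M ⊗[R] M →ₗ[R] M ⊗[R] M)
    (hρ : ∀ (a b : M) (ι κ : Type) (t : Finset ι) (u : Finset κ)
      (a₁ a₂ : ι → M) (b₁ b₂ : κ → M),
      comul (R := R) a = ∑ i ∈ t, a₁ i ⊗ₜ[R] a₂ i →
      comul (R := R) b = ∑ j ∈ u, b₁ j ⊗ₜ[R] b₂ j →
      ρ (a ⊗ₜ[R] b) = ∑ i ∈ t, ∑ j ∈ u, r.toFun (a₂ i) (b₂ j) • (a₁ i ⊗ₜ[R] b₁ j)) :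
    (∀ a : M, ρ ((1 : M) ⊗ₜ[R] a) = (1 : M) ⊗ₜ[R] a) ∧
    (∀ a : M, ρ (a ⊗ₜ[R] (1 : M)) = a ⊗ₜ[R] (1 : M)) ∧
    (mul23 R M (LinearMap.mul' R M) ∘ₗ map12 R M ρ ∘ₗ map13 R M ρ
      = ρ ∘ₗ mul23 R M (LinearMap.mul' R M)) ∧
    (mul12 R M (LinearMap.mul' R M) ∘ₗ map23 R M ρ ∘ₗ map13 R M ρ
      = ρ ∘ₗ mul12 R M (LinearMap.mul' R M)) ∧
    (map12 R M ρ ∘ₗ map13 R M ρ ∘ₗ map23 R M ρ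
      = map23 R M ρ ∘ₗ map13 R M ρ ∘ₗ map12 R M ρ) := by
  classical
  -- pointwise formula for ρ
  have hra : ∀ a b : M, ρ (a ⊗ₜ[R] b)
      = ∑ i ∈ rep R M a, ∑ j ∈ rep R M b, r.toFun i.2 j.2 • (i.1 ⊗ₜ[R] j.1) :=
    fun a b => hρ a b _ _ (rep R M a) (rep R M b) Prod.fst Prod.snd Prod.fst Prod.snd
      (rep_spec R M a) (rep_spec R M b)
  have h12 : ∀ x y z : M, map12 R M ρ (x ⊗ₜ[R] (y ⊗ₜ[R] z))
      = ∑ i ∈ rep R M x, ∑ j ∈ rep R M y,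
          r.toFun i.2 j.2 • (i.1 ⊗ₜ[R] (j.1 ⊗ₜ[R] z)) := by
    intro x y z
    rw [map12_tmul, hra]
    simp [TensorProduct.sum_tmul, TensorProduct.smul_tmul', map_sum]
  have h23 : ∀ (x y z : M), map23 R M ρ (x ⊗ₜ[R] (y ⊗ₜ[R] z))
      = ∑ j ∈ rep R M y, ∑ k ∈ rep R M z,
          r.toFun j.2 k.2 • (x ⊗ₜ[R] (j.1 ⊗ₜ[R] k.1)) := by
    intro x y z
    rw [map23_tmul, hra]
    simp [TensorProduct.tmul_sum, TensorProduct.tmul_smul]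
  have h13 : ∀ x y z : M, map13 R M ρ (x ⊗ₜ[R] (y ⊗ₜ[R] z))
      = ∑ i ∈ rep R M x, ∑ k ∈ rep R M z,
          r.toFun i.2 k.2 • (i.1 ⊗ₜ[R] (y ⊗ₜ[R] k.1)) := by
    intro x y z
    rw [map13_tmul, h12]
    simp [map_sum]
  refine ⟨?_, ?_, ?_, ?_, ?_⟩
  · -- ρ (1 ⊗ a) = 1 ⊗ a
    intro a
    have h1 : comul (R := R) (1 : M) = ∑ _i ∈ ({()} : Finset Unit), (1 : M) ⊗ₜ[R] (1 : M) := by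
      simp [← Algebra.TensorProduct.one_def]
    rw [hρ 1 a Unit (M × M) {()} (rep R M a) (fun _ => 1) (fun _ => 1) Prod.fst Prod.snd h1
      (rep_spec R M a)]
    simp only [Finset.sum_singleton, r.one_left]
    calc ∑ j ∈ rep R M a, counit (R := R) j.2 • ((1 : M) ⊗ₜ[R] j.1)
        = (1 : M) ⊗ₜ[R] ∑ j ∈ rep R M a, counit (R := R) j.2 • j.1 := by
          rw [TensorProduct.tmul_sum]
          exact Finset.sum_congr rfl fun j _ => (TensorProduct.tmul_smul _ _ _).symm
      _ = 1 ⊗ₜ[R] a := by rw [rep_counit]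
  · -- ρ (a ⊗ 1) = a ⊗ 1
    intro a
    have h1 : comul (R := R) (1 : M) = ∑ _i ∈ ({()} : Finset Unit), (1 : M) ⊗ₜ[R] (1 : M) := by
      simp [← Algebra.TensorProduct.one_def]
    rw [hρ a 1 (M × M) Unit (rep R M a) {()} Prod.fst Prod.snd (fun _ => 1) (fun _ => 1)
      (rep_spec R M a) h1]
    simp only [Finset.sum_singleton, r.one_right]
    calc ∑ i ∈ rep R M a, counit (R := R) i.2 • (i.1 ⊗ₜ[R] (1 : M))
        = (∑ i ∈ rep R M a, counit (R := R) i.2 • i.1) ⊗ₜ[R] (1 : M) := by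
          rw [TensorProduct.sum_tmul]
          exact Finset.sum_congr rfl fun i _ => (TensorProduct.smul_tmul' _ _ _).symm
      _ = a ⊗ₜ[R] 1 := by rw [rep_counit]
  · -- compatibility with multiplication in positions 2,3
    apply ext_triple
    intro a b c
    simp only [LinearMap.comp_apply]
    rw [mul23_tmul, LinearMap.mul'_apply, h13]
    simp only [map_sum, LinearMap.map_smul, h12, Finset.smul_sum, smul_smul, mul23_tmul,
      LinearMap.mul'_apply]
    have hbc : comul (R := R) (b * c) = ∑ q ∈ rep R M b ×ˢ rep R M c,
        (fun q : (M × M) × (M × M) => q.1.1 * q.2.1) q ⊗ₜ[R]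
        (fun q : (M × M) × (M × M) => q.1.2 * q.2.2) q := rep_mul b c
    rw [hρ a (b * c) _ _ (rep R M a) (rep R M b ×ˢ rep R M c) Prod.fst Prod.snd _ _
      (rep_spec R M a) hbc]
    have hmr : ∀ x u v : M, r.toFun x (u * v)
        = ∑ j ∈ rep R M x, r.toFun j.1 u * r.toFun j.2 v := fun x u v =>
      r.mul_right x u v _ (rep R M x) Prod.fst Prod.snd (rep_spec R M x)
    simp only [Finset.sum_product, hmr, Finset.sum_smul]
    have key := sum_coassoc (N := M ⊗[R] M)
      (∑ k ∈ rep R M c, ∑ l ∈ rep R M b,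
        tri (r.toFun.flip l.2) (r.toFun.flip k.2) ((TensorProduct.mk R M M).flip (l.1 * k.1))) a
    simp only [LinearMap.sum_apply, tri_apply, LinearMap.flip_apply,
      TensorProduct.mk_apply] at key
    calc ∑ i ∈ rep R M a, ∑ k ∈ rep R M c, ∑ j ∈ rep R M i.1, ∑ l ∈ rep R M b,
          (r.toFun i.2 k.2 * r.toFun j.2 l.2) • j.1 ⊗ₜ[R] (l.1 * k.1)
        = ∑ i ∈ rep R M a, ∑ j ∈ rep R M i.1, ∑ k ∈ rep R M c, ∑ l ∈ rep R M b,
          (r.toFun j.2 l.2 * r.toFun i.2 k.2) • j.1 ⊗ₜ[R] (l.1 * k.1) := by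
          refine Finset.sum_congr rfl fun i _ => ?_
          rw [Finset.sum_comm]
          exact Finset.sum_congr rfl fun j _ => Finset.sum_congr rfl fun k _ =>
            Finset.sum_congr rfl fun l _ => by rw [mul_comm]
      _ = ∑ i ∈ rep R M a, ∑ j ∈ rep R M i.2, ∑ k ∈ rep R M c, ∑ l ∈ rep R M b,
          (r.toFun j.1 l.2 * r.toFun j.2 k.2) • i.1 ⊗ₜ[R] (l.1 * k.1) := key
      _ = ∑ i ∈ rep R M a, ∑ l ∈ rep R M b, ∑ k ∈ rep R M c, ∑ j ∈ rep R M i.2,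
          (r.toFun j.1 l.2 * r.toFun j.2 k.2) • i.1 ⊗ₜ[R] (l.1 * k.1) := by
          refine Finset.sum_congr rfl fun i _ => ?_
          calc ∑ j ∈ rep R M i.2, ∑ k ∈ rep R M c, ∑ l ∈ rep R M b,
                (r.toFun j.1 l.2 * r.toFun j.2 k.2) • i.1 ⊗ₜ[R] (l.1 * k.1)
              = ∑ j ∈ rep R M i.2, ∑ l ∈ rep R M b, ∑ k ∈ rep R M c,
                (r.toFun j.1 l.2 * r.toFun j.2 k.2) • i.1 ⊗ₜ[R] (l.1 * k.1) :=
                Finset.sum_congr rfl fun j _ => Finset.sum_comm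
            _ = ∑ l ∈ rep R M b, ∑ j ∈ rep R M i.2, ∑ k ∈ rep R M c,
                (r.toFun j.1 l.2 * r.toFun j.2 k.2) • i.1 ⊗ₜ[R] (l.1 * k.1) :=
                Finset.sum_comm
            _ = ∑ l ∈ rep R M b, ∑ k ∈ rep R M c, ∑ j ∈ rep R M i.2,
                (r.toFun j.1 l.2 * r.toFun j.2 k.2) • i.1 ⊗ₜ[R] (l.1 * k.1) :=
                Finset.sum_congr rfl fun l _ => Finset.sum_comm
  · -- compatibility with multiplication in positions 1,2
    apply ext_triple
    intro a b c
    simp only [LinearMap.comp_apply]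
    rw [mul12_tmul, LinearMap.mul'_apply, h13]
    simp only [map_sum, LinearMap.map_smul, h23, Finset.smul_sum, smul_smul, mul12_tmul,
      LinearMap.mul'_apply]
    have hab : comul (R := R) (a * b) = ∑ q ∈ rep R M a ×ˢ rep R M b,
        (fun q : (M × M) × (M × M) => q.1.1 * q.2.1) q ⊗ₜ[R]
        (fun q : (M × M) × (M × M) => q.1.2 * q.2.2) q := rep_mul a b
    rw [hρ (a * b) c _ _ (rep R M a ×ˢ rep R M b) (rep R M c) _ _ Prod.fst Prod.snd hab
      (rep_spec R M c)]
    have hml : ∀ x u v : M, r.toFun (u * v) x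
        = ∑ m ∈ rep R M x, r.toFun u m.1 * r.toFun v m.2 := fun x u v =>
      r.mul_left u v x _ (rep R M x) Prod.fst Prod.snd (rep_spec R M x)
    simp only [Finset.sum_product, hml, Finset.sum_smul]
    have key := sum_swapA_B hcoc (N := M ⊗[R] M)
      (∑ i ∈ rep R M a, ∑ l ∈ rep R M b,
        tri (r.toFun i.2) (r.toFun l.2) (TensorProduct.mk R M M (i.1 * l.1))) c
    simp only [LinearMap.sum_apply, tri_apply, TensorProduct.mk_apply] at key
    calc ∑ i ∈ rep R M a, ∑ k ∈ rep R M c, ∑ l ∈ rep R M b, ∑ m ∈ rep R M k.1,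
          (r.toFun i.2 k.2 * r.toFun l.2 m.2) • (i.1 * l.1) ⊗ₜ[R] m.1
        = ∑ k ∈ rep R M c, ∑ m ∈ rep R M k.1, ∑ i ∈ rep R M a, ∑ l ∈ rep R M b,
          (r.toFun i.2 k.2 * r.toFun l.2 m.2) • (i.1 * l.1) ⊗ₜ[R] m.1 := by
          rw [Finset.sum_comm]
          refine Finset.sum_congr rfl fun k _ => ?_
          calc ∑ i ∈ rep R M a, ∑ l ∈ rep R M b, ∑ m ∈ rep R M k.1,
                (r.toFun i.2 k.2 * r.toFun l.2 m.2) • (i.1 * l.1) ⊗ₜ[R] m.1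
              = ∑ i ∈ rep R M a, ∑ m ∈ rep R M k.1, ∑ l ∈ rep R M b,
                (r.toFun i.2 k.2 * r.toFun l.2 m.2) • (i.1 * l.1) ⊗ₜ[R] m.1 :=
                Finset.sum_congr rfl fun i _ => Finset.sum_comm
            _ = ∑ m ∈ rep R M k.1, ∑ i ∈ rep R M a, ∑ l ∈ rep R M b,
                (r.toFun i.2 k.2 * r.toFun l.2 m.2) • (i.1 * l.1) ⊗ₜ[R] m.1 :=
                Finset.sum_comm
      _ = ∑ k ∈ rep R M c, ∑ m ∈ rep R M k.2, ∑ i ∈ rep R M a, ∑ l ∈ rep R M b,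
          (r.toFun i.2 m.1 * r.toFun l.2 m.2) • (i.1 * l.1) ⊗ₜ[R] k.1 := key
      _ = ∑ i ∈ rep R M a, ∑ k ∈ rep R M c, ∑ m ∈ rep R M k.2, ∑ l ∈ rep R M b,
          (r.toFun i.2 m.1 * r.toFun l.2 m.2) • (i.1 * l.1) ⊗ₜ[R] k.1 :=
          calc ∑ k ∈ rep R M c, ∑ m ∈ rep R M k.2, ∑ i ∈ rep R M a, ∑ l ∈ rep R M b,
                (r.toFun i.2 m.1 * r.toFun l.2 m.2) • (i.1 * l.1) ⊗ₜ[R] k.1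
              = ∑ k ∈ rep R M c, ∑ i ∈ rep R M a, ∑ m ∈ rep R M k.2, ∑ l ∈ rep R M b,
                (r.toFun i.2 m.1 * r.toFun l.2 m.2) • (i.1 * l.1) ⊗ₜ[R] k.1 :=
                Finset.sum_congr rfl fun k _ => Finset.sum_comm
            _ = ∑ i ∈ rep R M a, ∑ k ∈ rep R M c, ∑ m ∈ rep R M k.2, ∑ l ∈ rep R M b,
                (r.toFun i.2 m.1 * r.toFun l.2 m.2) • (i.1 * l.1) ⊗ₜ[R] k.1 :=
                Finset.sum_comm
      _ = ∑ i ∈ rep R M a, ∑ l ∈ rep R M b, ∑ k ∈ rep R M c, ∑ m ∈ rep R M k.2,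
          (r.toFun i.2 m.1 * r.toFun l.2 m.2) • (i.1 * l.1) ⊗ₜ[R] k.1 := by
          refine Finset.sum_congr rfl fun i _ => ?_
          calc ∑ k ∈ rep R M c, ∑ m ∈ rep R M k.2, ∑ l ∈ rep R M b,
                (r.toFun i.2 m.1 * r.toFun l.2 m.2) • (i.1 * l.1) ⊗ₜ[R] k.1
              = ∑ k ∈ rep R M c, ∑ l ∈ rep R M b, ∑ m ∈ rep R M k.2,
                (r.toFun i.2 m.1 * r.toFun l.2 m.2) • (i.1 * l.1) ⊗ₜ[R] k.1 :=
                Finset.sum_congr rfl fun k _ => Finset.sum_comm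
            _ = ∑ l ∈ rep R M b, ∑ k ∈ rep R M c, ∑ m ∈ rep R M k.2,
                (r.toFun i.2 m.1 * r.toFun l.2 m.2) • (i.1 * l.1) ⊗ₜ[R] k.1 :=
                Finset.sum_comm
  · -- Yang-Baxter
    apply ext_triple
    intro a b c
    simp only [LinearMap.comp_apply]
    rw [h23 a b c, h12 a b c]
    simp only [map_sum, LinearMap.map_smul, h13, h12, h23, Finset.smul_sum, smul_smul]
    have keyc : ∀ i j l n : M × M,
        ∑ k ∈ rep R M c, ∑ m ∈ rep R M k.1,
          (r.toFun l.2 k.2 * r.toFun i.2 m.2 * r.toFun j.2 n.2) • j.1 ⊗ₜ[R] (n.1 ⊗ₜ[R] m.1)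
        = ∑ k ∈ rep R M c, ∑ m ∈ rep R M k.1,
          (r.toFun l.2 m.2 * r.toFun i.2 k.2 * r.toFun j.2 n.2) • j.1 ⊗ₜ[R] (n.1 ⊗ₜ[R] m.1) := by
      intro i j l n
      have h := sum_swap23 hcoc (N := M ⊗[R] (M ⊗[R] M))
        (tri (r.toFun i.2) (r.toFun l.2)
          (r.toFun j.2 n.2 • ((TensorProduct.mk R M (M ⊗[R] M) j.1) ∘ₗ
            (TensorProduct.mk R M M n.1)))) c
      simp only [tri_apply, LinearMap.smul_apply, LinearMap.comp_apply,
        TensorProduct.mk_apply] at h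
      calc ∑ k ∈ rep R M c, ∑ m ∈ rep R M k.1,
            (r.toFun l.2 k.2 * r.toFun i.2 m.2 * r.toFun j.2 n.2) • j.1 ⊗ₜ[R] (n.1 ⊗ₜ[R] m.1)
          = ∑ k ∈ rep R M c, ∑ m ∈ rep R M k.1,
            (r.toFun i.2 m.2 * r.toFun l.2 k.2) •
              r.toFun j.2 n.2 • j.1 ⊗ₜ[R] (n.1 ⊗ₜ[R] m.1) :=
            Finset.sum_congr rfl fun k _ => Finset.sum_congr rfl fun m _ => by module
        _ = ∑ k ∈ rep R M c, ∑ m ∈ rep R M k.1,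
            (r.toFun i.2 k.2 * r.toFun l.2 m.2) •
              r.toFun j.2 n.2 • j.1 ⊗ₜ[R] (n.1 ⊗ₜ[R] m.1) := h
        _ = ∑ k ∈ rep R M c, ∑ m ∈ rep R M k.1,
            (r.toFun l.2 m.2 * r.toFun i.2 k.2 * r.toFun j.2 n.2) • j.1 ⊗ₜ[R] (n.1 ⊗ₜ[R] m.1) :=
            Finset.sum_congr rfl fun k _ => Finset.sum_congr rfl fun m _ => by module
    have keyb : ∀ i j : M × M,
        ∑ l ∈ rep R M b, ∑ n ∈ rep R M l.1, ∑ k ∈ rep R M c, ∑ m ∈ rep R M k.1,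
          (r.toFun l.2 m.2 * r.toFun i.2 k.2 * r.toFun j.2 n.2) • j.1 ⊗ₜ[R] (n.1 ⊗ₜ[R] m.1)
        = ∑ l ∈ rep R M b, ∑ n ∈ rep R M l.1, ∑ k ∈ rep R M c, ∑ m ∈ rep R M k.1,
          (r.toFun n.2 m.2 * r.toFun i.2 k.2 * r.toFun j.2 l.2) • j.1 ⊗ₜ[R] (n.1 ⊗ₜ[R] m.1) := by
      intro i j
      have h := sum_swap23 hcoc (N := M ⊗[R] (M ⊗[R] M))
        (∑ k ∈ rep R M c, ∑ m ∈ rep R M k.1,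
          tri (r.toFun j.2) (r.toFun.flip m.2)
            (r.toFun i.2 k.2 • ((TensorProduct.mk R M (M ⊗[R] M) j.1) ∘ₗ
              ((TensorProduct.mk R M M).flip m.1)))) b
      simp only [LinearMap.sum_apply, tri_apply, LinearMap.smul_apply, LinearMap.comp_apply,
        LinearMap.flip_apply, TensorProduct.mk_apply] at h
      calc ∑ l ∈ rep R M b, ∑ n ∈ rep R M l.1, ∑ k ∈ rep R M c, ∑ m ∈ rep R M k.1,
            (r.toFun l.2 m.2 * r.toFun i.2 k.2 * r.toFun j.2 n.2) • j.1 ⊗ₜ[R] (n.1 ⊗ₜ[R] m.1)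
          = ∑ l ∈ rep R M b, ∑ n ∈ rep R M l.1, ∑ k ∈ rep R M c, ∑ m ∈ rep R M k.1,
            (r.toFun j.2 n.2 * r.toFun l.2 m.2) •
              r.toFun i.2 k.2 • j.1 ⊗ₜ[R] (n.1 ⊗ₜ[R] m.1) :=
            Finset.sum_congr rfl fun l _ => Finset.sum_congr rfl fun n _ =>
              Finset.sum_congr rfl fun k _ => Finset.sum_congr rfl fun m _ => by module
        _ = ∑ l ∈ rep R M b, ∑ n ∈ rep R M l.1, ∑ k ∈ rep R M c, ∑ m ∈ rep R M k.1,
            (r.toFun j.2 l.2 * r.toFun n.2 m.2) •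
              r.toFun i.2 k.2 • j.1 ⊗ₜ[R] (n.1 ⊗ₜ[R] m.1) := h
        _ = ∑ l ∈ rep R M b, ∑ n ∈ rep R M l.1, ∑ k ∈ rep R M c, ∑ m ∈ rep R M k.1,
            (r.toFun n.2 m.2 * r.toFun i.2 k.2 * r.toFun j.2 l.2) • j.1 ⊗ₜ[R] (n.1 ⊗ₜ[R] m.1) :=
            Finset.sum_congr rfl fun l _ => Finset.sum_congr rfl fun n _ =>
              Finset.sum_congr rfl fun k _ => Finset.sum_congr rfl fun m _ => by module
    have keya :
        ∑ i ∈ rep R M a, ∑ j ∈ rep R M i.1, ∑ l ∈ rep R M b, ∑ n ∈ rep R M l.1,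
          ∑ k ∈ rep R M c, ∑ m ∈ rep R M k.1,
          (r.toFun n.2 m.2 * r.toFun i.2 k.2 * r.toFun j.2 l.2) • j.1 ⊗ₜ[R] (n.1 ⊗ₜ[R] m.1)
        = ∑ i ∈ rep R M a, ∑ j ∈ rep R M i.1, ∑ l ∈ rep R M b, ∑ n ∈ rep R M l.1,
          ∑ k ∈ rep R M c, ∑ m ∈ rep R M k.1,
          (r.toFun i.2 l.2 * r.toFun j.2 k.2 * r.toFun n.2 m.2) • j.1 ⊗ₜ[R] (n.1 ⊗ₜ[R] m.1) := by
      have h := sum_swap23 hcoc (N := M ⊗[R] (M ⊗[R] M))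
        (∑ l ∈ rep R M b, ∑ n ∈ rep R M l.1, ∑ k ∈ rep R M c, ∑ m ∈ rep R M k.1,
          tri (r.toFun.flip l.2) (r.toFun.flip k.2)
            (r.toFun n.2 m.2 • ((TensorProduct.mk R M (M ⊗[R] M)).flip
              (n.1 ⊗ₜ[R] m.1)))) a
      simp only [LinearMap.sum_apply, tri_apply, LinearMap.smul_apply, LinearMap.flip_apply,
        TensorProduct.mk_apply] at h
      calc ∑ i ∈ rep R M a, ∑ j ∈ rep R M i.1, ∑ l ∈ rep R M b, ∑ n ∈ rep R M l.1,
            ∑ k ∈ rep R M c, ∑ m ∈ rep R M k.1,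
            (r.toFun n.2 m.2 * r.toFun i.2 k.2 * r.toFun j.2 l.2) • j.1 ⊗ₜ[R] (n.1 ⊗ₜ[R] m.1)
          = ∑ i ∈ rep R M a, ∑ j ∈ rep R M i.1, ∑ l ∈ rep R M b, ∑ n ∈ rep R M l.1,
            ∑ k ∈ rep R M c, ∑ m ∈ rep R M k.1,
            (r.toFun j.2 l.2 * r.toFun i.2 k.2) •
              r.toFun n.2 m.2 • j.1 ⊗ₜ[R] (n.1 ⊗ₜ[R] m.1) :=
            Finset.sum_congr rfl fun i _ => Finset.sum_congr rfl fun j _ =>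
              Finset.sum_congr rfl fun l _ => Finset.sum_congr rfl fun n _ =>
              Finset.sum_congr rfl fun k _ => Finset.sum_congr rfl fun m _ => by module
        _ = ∑ i ∈ rep R M a, ∑ j ∈ rep R M i.1, ∑ l ∈ rep R M b, ∑ n ∈ rep R M l.1,
            ∑ k ∈ rep R M c, ∑ m ∈ rep R M k.1,
            (r.toFun i.2 l.2 * r.toFun j.2 k.2) •
              r.toFun n.2 m.2 • j.1 ⊗ₜ[R] (n.1 ⊗ₜ[R] m.1) := h
        _ = ∑ i ∈ rep R M a, ∑ j ∈ rep R M i.1, ∑ l ∈ rep R M b, ∑ n ∈ rep R M l.1,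
            ∑ k ∈ rep R M c, ∑ m ∈ rep R M k.1,
            (r.toFun i.2 l.2 * r.toFun j.2 k.2 * r.toFun n.2 m.2) • j.1 ⊗ₜ[R] (n.1 ⊗ₜ[R] m.1) :=
            Finset.sum_congr rfl fun i _ => Finset.sum_congr rfl fun j _ =>
              Finset.sum_congr rfl fun l _ => Finset.sum_congr rfl fun n _ =>
              Finset.sum_congr rfl fun k _ => Finset.sum_congr rfl fun m _ => by module
    calc ∑ l ∈ rep R M b,
          ∑ k ∈ rep R M c,
          ∑ i ∈ rep R M a,
          ∑ m ∈ rep R M k.1,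
          ∑ j ∈ rep R M i.1,
          ∑ n ∈ rep R M l.1,
            (r.toFun l.2 k.2 * r.toFun i.2 m.2 * r.toFun j.2 n.2) • j.1 ⊗ₜ[R] (n.1 ⊗ₜ[R] m.1)
      _ = ∑ l ∈ rep R M b,
          ∑ k ∈ rep R M c,
          ∑ i ∈ rep R M a,
          ∑ j ∈ rep R M i.1,
          ∑ m ∈ rep R M k.1,
          ∑ n ∈ rep R M l.1,
            (r.toFun l.2 k.2 * r.toFun i.2 m.2 * r.toFun j.2 n.2) • j.1 ⊗ₜ[R] (n.1 ⊗ₜ[R] m.1) :=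
          Finset.sum_congr rfl fun l _ => (Finset.sum_congr rfl fun k _ => (Finset.sum_congr rfl fun i _ => (Finset.sum_comm)))
      _ = ∑ l ∈ rep R M b,
          ∑ k ∈ rep R M c,
          ∑ i ∈ rep R M a,
          ∑ j ∈ rep R M i.1,
          ∑ n ∈ rep R M l.1,
          ∑ m ∈ rep R M k.1,
            (r.toFun l.2 k.2 * r.toFun i.2 m.2 * r.toFun j.2 n.2) • j.1 ⊗ₜ[R] (n.1 ⊗ₜ[R] m.1) :=
          Finset.sum_congr rfl fun l _ => (Finset.sum_congr rfl fun k _ => (Finset.sum_congr rfl fun i _ => (Finset.sum_congr rfl fun j _ => (Finset.sum_comm))))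
      _ = ∑ l ∈ rep R M b,
          ∑ i ∈ rep R M a,
          ∑ k ∈ rep R M c,
          ∑ j ∈ rep R M i.1,
          ∑ n ∈ rep R M l.1,
          ∑ m ∈ rep R M k.1,
            (r.toFun l.2 k.2 * r.toFun i.2 m.2 * r.toFun j.2 n.2) • j.1 ⊗ₜ[R] (n.1 ⊗ₜ[R] m.1) :=
          Finset.sum_congr rfl fun l _ => (Finset.sum_comm)
      _ = ∑ l ∈ rep R M b,
          ∑ i ∈ rep R M a,
          ∑ j ∈ rep R M i.1,
          ∑ k ∈ rep R M c,
          ∑ n ∈ rep R M l.1,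
          ∑ m ∈ rep R M k.1,
            (r.toFun l.2 k.2 * r.toFun i.2 m.2 * r.toFun j.2 n.2) • j.1 ⊗ₜ[R] (n.1 ⊗ₜ[R] m.1) :=
          Finset.sum_congr rfl fun l _ => (Finset.sum_congr rfl fun i _ => (Finset.sum_comm))
      _ = ∑ l ∈ rep R M b,
          ∑ i ∈ rep R M a,
          ∑ j ∈ rep R M i.1,
          ∑ n ∈ rep R M l.1,
          ∑ k ∈ rep R M c,
          ∑ m ∈ rep R M k.1,
            (r.toFun l.2 k.2 * r.toFun i.2 m.2 * r.toFun j.2 n.2) • j.1 ⊗ₜ[R] (n.1 ⊗ₜ[R] m.1) :=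
          Finset.sum_congr rfl fun l _ => (Finset.sum_congr rfl fun i _ => (Finset.sum_congr rfl fun j _ => (Finset.sum_comm)))
      _ = ∑ i ∈ rep R M a,
          ∑ l ∈ rep R M b,
          ∑ j ∈ rep R M i.1,
          ∑ n ∈ rep R M l.1,
          ∑ k ∈ rep R M c,
          ∑ m ∈ rep R M k.1,
            (r.toFun l.2 k.2 * r.toFun i.2 m.2 * r.toFun j.2 n.2) • j.1 ⊗ₜ[R] (n.1 ⊗ₜ[R] m.1) :=
          Finset.sum_comm
      _ = ∑ i ∈ rep R M a,
          ∑ j ∈ rep R M i.1,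
          ∑ l ∈ rep R M b,
          ∑ n ∈ rep R M l.1,
          ∑ k ∈ rep R M c,
          ∑ m ∈ rep R M k.1,
            (r.toFun l.2 k.2 * r.toFun i.2 m.2 * r.toFun j.2 n.2) • j.1 ⊗ₜ[R] (n.1 ⊗ₜ[R] m.1) :=
          Finset.sum_congr rfl fun i _ => (Finset.sum_comm)
      _ = ∑ i ∈ rep R M a,
          ∑ j ∈ rep R M i.1,
          ∑ l ∈ rep R M b,
          ∑ n ∈ rep R M l.1,
          ∑ k ∈ rep R M c,
          ∑ m ∈ rep R M k.1,
            (r.toFun l.2 m.2 * r.toFun i.2 k.2 * r.toFun j.2 n.2) • j.1 ⊗ₜ[R] (n.1 ⊗ₜ[R] m.1) :=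
          Finset.sum_congr rfl fun i _ => Finset.sum_congr rfl fun j _ =>
            Finset.sum_congr rfl fun l _ => Finset.sum_congr rfl fun n _ => keyc i j l n
      _ = ∑ i ∈ rep R M a,
          ∑ j ∈ rep R M i.1,
          ∑ l ∈ rep R M b,
          ∑ n ∈ rep R M l.1,
          ∑ k ∈ rep R M c,
          ∑ m ∈ rep R M k.1,
            (r.toFun n.2 m.2 * r.toFun i.2 k.2 * r.toFun j.2 l.2) • j.1 ⊗ₜ[R] (n.1 ⊗ₜ[R] m.1) :=
          Finset.sum_congr rfl fun i _ => Finset.sum_congr rfl fun j _ => keyb i j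
      _ = ∑ i ∈ rep R M a,
          ∑ j ∈ rep R M i.1,
          ∑ l ∈ rep R M b,
          ∑ n ∈ rep R M l.1,
          ∑ k ∈ rep R M c,
          ∑ m ∈ rep R M k.1,
            (r.toFun i.2 l.2 * r.toFun j.2 k.2 * r.toFun n.2 m.2) • j.1 ⊗ₜ[R] (n.1 ⊗ₜ[R] m.1) :=
          keya
      _ = ∑ i ∈ rep R M a,
          ∑ j ∈ rep R M i.1,
          ∑ l ∈ rep R M b,
          ∑ k ∈ rep R M c,
          ∑ n ∈ rep R M l.1,
          ∑ m ∈ rep R M k.1,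
            (r.toFun i.2 l.2 * r.toFun j.2 k.2 * r.toFun n.2 m.2) • j.1 ⊗ₜ[R] (n.1 ⊗ₜ[R] m.1) :=
          Finset.sum_congr rfl fun i _ => (Finset.sum_congr rfl fun j _ => (Finset.sum_congr rfl fun l _ => (Finset.sum_comm)))
      _ = ∑ i ∈ rep R M a,
          ∑ l ∈ rep R M b,
          ∑ j ∈ rep R M i.1,
          ∑ k ∈ rep R M c,
          ∑ n ∈ rep R M l.1,
          ∑ m ∈ rep R M k.1,
            (r.toFun i.2 l.2 * r.toFun j.2 k.2 * r.toFun n.2 m.2) • j.1 ⊗ₜ[R] (n.1 ⊗ₜ[R] m.1) :=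
          Finset.sum_congr rfl fun i _ => (Finset.sum_comm)
end

section
/- Let H be a cocommutative bialgebra over R and M a commutative R-algebra. Then the universal algebra H(M) carries a natural action of H as a bialgebra (i.e., H acts by measuring: h(ab) = Σ h'(a)h''(b), h(1) = η(h)1), determined by h₁(h₂(m)) = (h₁h₂)(m) for h₁,h₂ ∈ H, m ∈ M. -/
open TensorProduct Coalgebra


/-- A bundled commutative algebra over `R`. -/
structure CommAlgebraOver (R : Type) [CommRing R] : Type 1 where
  carrier : Type
  [commRing : CommRing carrier]
  [algebra : Algebra R carrier]

attribute [instance] CommAlgebraOver.commRing CommAlgebraOver.algebra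

/-- The map `φ : H ⊗ M → A`, `(h, m) ↦ h(m)`, satisfies `h(mn) = Σ h'(m)h''(n)`
and `h(1) = η(h)·1`. -/
def Measures (R H M A : Type) [CommRing R] [AddCommGroup H] [Module R H]
    [Coalgebra R H] [CommRing M] [Algebra R M] [CommRing A] [Algebra R A]
    (φ : H →ₗ[R] M →ₗ[R] A) : Prop :=
  (∀ h : H, φ h 1 = algebraMap R A (counit (R := R) h)) ∧
  (∀ (h : H) (m n : M) (ι : Type) (t : Finset ι) (h₁ h₂ : ι → H),
    comul (R := R) h = ∑ i ∈ t, h₁ i ⊗ₜ[R] h₂ i →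
    φ h (m * n) = ∑ i ∈ t, φ (h₁ i) m * φ (h₂ i) n)

section Conv
variable {R H A : Type} [CommRing R] [AddCommGroup H] [Module R H] [Coalgebra R H]
  [CommRing A] [Algebra R A]

/-- Convolution product on `H →ₗ[R] A`. -/
noncomputable def convMul (u v : H →ₗ[R] A) : H →ₗ[R] A :=
  LinearMap.mul' R A ∘ₗ TensorProduct.map u v ∘ₗ CoalgebraStruct.comul

/-- Convolution unit. -/
noncomputable def convOne : H →ₗ[R] A :=
  Algebra.linearMap R A ∘ₗ CoalgebraStruct.counit

lemma convOne_apply (h : H) : (convOne : H →ₗ[R] A) h = algebraMap R A (counit (R := R) h) := rfl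

lemma convMul_repr {h : H} {ι : Type*} {t : Finset ι} {h₁ h₂ : ι → H}
    (hrep : comul (R := R) h = ∑ i ∈ t, h₁ i ⊗ₜ[R] h₂ i) (u v : H →ₗ[R] A) :
    convMul u v h = ∑ i ∈ t, u (h₁ i) * v (h₂ i) := by
  simp [convMul, hrep]

lemma exists_repr (h : H) :
    ∃ S : Finset (H × H), comul (R := R) h = ∑ p ∈ S, p.1 ⊗ₜ[R] p.2 :=
  TensorProduct.exists_finset _

lemma convOne_mul (v : H →ₗ[R] A) : convMul convOne v = v := by
  ext h
  obtain ⟨S, hS⟩ := exists_repr (R := R) h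
  let r : Coalgebra.Repr R h (H × H) := ⟨S, Prod.fst, Prod.snd, hS.symm⟩
  have key := congrArg (TensorProduct.lid R A)
    (Coalgebra.sum_counit_tmul_map_eq (R := R) v h (repr := r))
  simp only [map_sum, TensorProduct.lid_tmul, one_smul] at key
  rw [convMul_repr hS]
  calc ∑ p ∈ S, convOne p.1 * v p.2
      = ∑ p ∈ S, counit (R := R) p.1 • v p.2 := by
        simp [convOne_apply, Algebra.smul_def]
    _ = v h := key

lemma convMul_one (v : H →ₗ[R] A) : convMul v convOne = v := by
  ext h
  obtain ⟨S, hS⟩ := exists_repr (R := R) h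
  let r : Coalgebra.Repr R h (H × H) := ⟨S, Prod.fst, Prod.snd, hS.symm⟩
  have key := congrArg (TensorProduct.rid R A)
    (Coalgebra.sum_map_tmul_counit_eq (R := R) v h (repr := r))
  simp only [map_sum, TensorProduct.rid_tmul, one_smul] at key
  rw [convMul_repr hS]
  calc ∑ p ∈ S, v p.1 * convOne p.2
      = ∑ p ∈ S, counit (R := R) p.2 • v p.1 := by
        simp [convOne_apply, Algebra.smul_def, mul_comm]
    _ = v h := key

lemma convMul_assoc (u v w : H →ₗ[R] A) :
    convMul (convMul u v) w = convMul u (convMul v w) := by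
  ext h
  obtain ⟨S, hS⟩ := exists_repr (R := R) h
  let r : Coalgebra.Repr R h (H × H) := ⟨S, Prod.fst, Prod.snd, hS.symm⟩
  let r₁ : ∀ i : H × H, Coalgebra.Repr R (r.left i) (H × H) := fun i => ℛ R i.1
  let r₂ : ∀ i : H × H, Coalgebra.Repr R (r.right i) (H × H) := fun i => ℛ R i.2
  have key := Coalgebra.sum_map_tmul_tmul_eq (f := u) (g := v) (h := w) (a := h)
    (repr := r) (a₁ := r₁) (a₂ := r₂)
  have key2 := congrArg (LinearMap.mul' R A ∘ₗ LinearMap.lTensor A (LinearMap.mul' R A)) key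
  simp only [map_sum, LinearMap.coe_comp, Function.comp_apply, LinearMap.lTensor_tmul,
    LinearMap.mul'_apply] at key2
  rw [convMul_repr hS, convMul_repr hS]
  calc ∑ p ∈ S, convMul u v p.1 * w p.2
      = ∑ p ∈ S, ∑ j ∈ (r₁ p).index, u ((r₁ p).left j) * ((v ((r₁ p).right j)) * w p.2) := by
        refine Finset.sum_congr rfl fun p _ => ?_
        rw [convMul_repr (r₁ p).eq.symm, Finset.sum_mul]
        simp [mul_assoc]
    _ = ∑ p ∈ S, u p.1 * convMul v w p.2 := by
        rw [← key2]
        refine Finset.sum_congr rfl fun p _ => ?_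
        rw [convMul_repr (r₂ p).eq.symm, Finset.mul_sum]

lemma convMul_comm (hcoc : ∀ h : H, TensorProduct.comm R H H (comul (R := R) h)
      = comul (R := R) h) (u v : H →ₗ[R] A) :
    convMul u v = convMul v u := by
  ext h
  obtain ⟨S, hS⟩ := exists_repr (R := R) h
  have hS' : comul (R := R) h = ∑ p ∈ S, p.2 ⊗ₜ[R] p.1 := by
    conv_lhs => rw [← hcoc h, hS]
    simp
  rw [convMul_repr hS u v, convMul_repr hS' v u]
  exact Finset.sum_congr rfl fun p _ => mul_comm _ _

lemma convMul_add (u v w : H →ₗ[R] A) :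
    convMul u (v + w) = convMul u v + convMul u w := by
  ext h
  obtain ⟨S, hS⟩ := exists_repr (R := R) h
  simp [convMul_repr hS, mul_add, Finset.sum_add_distrib]

lemma convAdd_mul (u v w : H →ₗ[R] A) :
    convMul (u + v) w = convMul u w + convMul v w := by
  ext h
  obtain ⟨S, hS⟩ := exists_repr (R := R) h
  simp [convMul_repr hS, add_mul, Finset.sum_add_distrib]

lemma convMul_zero (u : H →ₗ[R] A) : convMul u 0 = 0 := by
  ext h
  obtain ⟨S, hS⟩ := exists_repr (R := R) h
  simp [convMul_repr hS]

lemma convZero_mul (u : H →ₗ[R] A) : convMul 0 u = 0 := by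
  ext h
  obtain ⟨S, hS⟩ := exists_repr (R := R) h
  simp [convMul_repr hS]

lemma convSmul_mul (c : R) (u v : H →ₗ[R] A) :
    convMul (c • u) v = c • convMul u v := by
  ext h
  obtain ⟨S, hS⟩ := exists_repr (R := R) h
  simp [convMul_repr hS, Finset.smul_sum, smul_mul_assoc]

lemma convMul_smul (c : R) (u v : H →ₗ[R] A) :
    convMul u (c • v) = c • convMul u v := by
  ext h
  obtain ⟨S, hS⟩ := exists_repr (R := R) h
  simp [convMul_repr hS, Finset.smul_sum, mul_smul_comm]

/-- The convolution commutative ring structure on `H →ₗ[R] A` when `H` is cocommutative and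
`A` commutative. -/
noncomputable def convCommRing (hcoc : ∀ h : H, TensorProduct.comm R H H (comul (R := R) h)
      = comul (R := R) h) : CommRing (H →ₗ[R] A) :=
  { (inferInstance : AddCommGroup (H →ₗ[R] A)) with
    mul := convMul
    one := convOne
    left_distrib := convMul_add
    right_distrib := convAdd_mul
    zero_mul := convZero_mul
    mul_zero := convMul_zero
    mul_assoc := convMul_assoc
    one_mul := convOne_mul
    mul_one := convMul_one
    mul_comm := convMul_comm hcoc }

end Conv

/-- If `H` is a cocommutative bialgebra and `M` a commutative `R`-algebra, then
the universal measuring algebra `H(M)` carries a natural `H`-action by measuring,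
determined by `h₁(h₂(m)) = (h₁h₂)(m)`. -/
theorem universal_measuring_algebra_H_action (R H M A : Type) [CommRing R]
    [Ring H] [Bialgebra R H]
    (hcoc : ∀ h : H, TensorProduct.comm R H H (comul (R := R) h) = comul (R := R) h)
    [CommRing M] [Algebra R M] [CommRing A] [Algebra R A]
    (φ : H →ₗ[R] M →ₗ[R] A) (hφ : Measures R H M A φ)
    (huniv : ∀ (B : CommAlgebraOver R) (ψ : H →ₗ[R] M →ₗ[R] B.carrier),
      Measures R H M B.carrier ψ →
      ∃! f : A →ₐ[R] B.carrier, ∀ (h : H) (m : M), f (φ h m) = ψ h m) :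
    ∃ ρ : H →ₗ[R] A →ₗ[R] A,
      -- `H` measures `H(M)`
      (∀ h : H, ρ h 1 = algebraMap R A (counit (R := R) h)) ∧
      (∀ (h : H) (a b : A) (ι : Type) (t : Finset ι) (h₁ h₂ : ι → H),
        comul (R := R) h = ∑ i ∈ t, h₁ i ⊗ₜ[R] h₂ i →
        ρ h (a * b) = ∑ i ∈ t, ρ (h₁ i) a * ρ (h₂ i) b) ∧
      -- `ρ` is an action of the algebra `H`
      (∀ (h₁ h₂ : H) (a : A), ρ (h₁ * h₂) a = ρ h₁ (ρ h₂ a)) ∧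
      (∀ a : A, ρ 1 a = a) ∧
      -- the action is determined by `h₁(h₂(m)) = (h₁h₂)(m)`
      (∀ (h₁ h₂ : H) (m : M), ρ h₁ (φ h₂ m) = φ (h₁ * h₂) m) := by
  letI instL : CommRing (H →ₗ[R] A) := convCommRing hcoc
  letI instLA : Algebra R (H →ₗ[R] A) :=
    @Algebra.ofModule R _ _ _ LinearMap.module (fun c u v => convSmul_mul c u v) (fun c u v => convMul_smul c u v)
  -- the measuring ψ h m = (h' ↦ φ (h' * h) m), into the convolution algebra
  let ψ : H →ₗ[R] M →ₗ[R] (H →ₗ[R] A) :=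
    { toFun := fun h =>
        { toFun := fun m => φ.flip m ∘ₗ LinearMap.mulRight R h
          map_add' := by intro m n; ext h'; simp
          map_smul' := by intro c m; ext h'; simp }
      map_add' := by intro h k; ext m h'; simp [mul_add]
      map_smul' := by intro c h; ext m h'; simp [mul_smul_comm] }
  have ψ_apply : ∀ (h : H) (m : M) (h' : H), ψ h m h' = φ (h' * h) m := fun _ _ _ => rfl
  have hψ : Measures R H M (H →ₗ[R] A) ψ := by
    constructor
    · intro h
      ext h'
      erw [ψ_apply]; rw [hφ.1]
      show algebraMap R A (counit (R := R) (h' * h))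
        = (algebraMap R (H →ₗ[R] A) (counit (R := R) h)) h'
      rw [Algebra.algebraMap_eq_smul_one (A := H →ₗ[R] A), LinearMap.smul_apply]
      show _ = counit (R := R) h • convOne h'
      rw [convOne_apply, Bialgebra.counit_mul, map_mul, mul_comm, ← Algebra.smul_def]
    · intro h m n ι t h₁ h₂ hrep
      ext h'
      obtain ⟨S, hS⟩ := exists_repr (R := R) h'
      have hrep' : comul (R := R) (h' * h)
          = ∑ q ∈ S ×ˢ t, (q.1.1 * h₁ q.2) ⊗ₜ[R] (q.1.2 * h₂ q.2) := by
        rw [Bialgebra.comul_mul, hS, hrep, Finset.sum_mul_sum, Finset.sum_product]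
        simp [Algebra.TensorProduct.tmul_mul_tmul]
      have lhs : φ (h' * h) (m * n)
          = ∑ p ∈ S, ∑ i ∈ t, φ (p.1 * h₁ i) m * φ (p.2 * h₂ i) n := by
        rw [hφ.2 (h' * h) m n ((H × H) × ι) (S ×ˢ t) (fun q => q.1.1 * h₁ q.2)
          (fun q => q.1.2 * h₂ q.2) hrep', Finset.sum_product]
      erw [ψ_apply]; rw [lhs, Finset.sum_comm]; erw [LinearMap.sum_apply]
      refine Finset.sum_congr rfl fun i _ => ?_
      show _ = convMul (ψ (h₁ i) m) (ψ (h₂ i) n) h'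
      rw [convMul_repr hS]
      rfl
  obtain ⟨f, hf, -⟩ := huniv ⟨H →ₗ[R] A⟩ ψ hψ
  -- evaluation at 1 is an algebra hom
  let ev1 : (H →ₗ[R] A) →ₐ[R] A :=
    { toFun := fun u => u 1
      map_one' := by
        show convOne (1 : H) = 1
        simp [convOne_apply]
      map_mul' := by
        intro u v
        show convMul u v 1 = u 1 * v 1
        have hrep : comul (R := R) (1 : H)
            = ∑ _i ∈ ({0} : Finset ℕ), (1 : H) ⊗ₜ[R] (1 : H) := by
          simp [Algebra.TensorProduct.one_def]
        rw [convMul_repr hrep]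
        simp
      map_zero' := rfl
      map_add' := fun u v => rfl
      commutes' := by
        intro c
        show (algebraMap R (H →ₗ[R] A) c) 1 = algebraMap R A c
        rw [Algebra.algebraMap_eq_smul_one, LinearMap.smul_apply]
        show c • convOne (1 : H) = _
        simp [convOne_apply, Algebra.smul_def] }
  obtain ⟨g₀, hg₀, hg₀uniq⟩ := huniv ⟨A⟩ φ hφ
  have hev1 : ev1.comp f = AlgHom.id R A := by
    refine (hg₀uniq _ ?_).trans (hg₀uniq _ fun _ _ => rfl).symm
    intro h m
    show ev1 (f (φ h m)) = φ h m
    rw [hf]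
    show φ (1 * h) m = φ h m
    rw [one_mul]
  -- the key property for elements in the image
  have hmem : ∀ (h : H) (m : M), ∀ k₁ k₂ : H,
      f (φ h m) (k₁ * k₂) = f (f (φ h m) k₂) k₁ := by
    intro h m k₁ k₂
    rw [hf]
    show φ ((k₁ * k₂) * h) m = f (φ (k₂ * h) m) k₁
    rw [hf]
    show φ ((k₁ * k₂) * h) m = φ (k₁ * (k₂ * h)) m
    rw [mul_assoc]
  have halg : ∀ (c : R) (k : H),
      f (algebraMap R A c) k = algebraMap R A (c * counit (R := R) k) := by
    intro c k
    calc f (algebraMap R A c) k = (c • (1 : H →ₗ[R] A)) k := by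
          rw [AlgHom.commutes, Algebra.algebraMap_eq_smul_one]
      _ = c • algebraMap R A (counit (R := R) k) := by
          rw [LinearMap.smul_apply]; rfl
      _ = algebraMap R A (c * counit (R := R) k) := by
          rw [map_mul, Algebra.smul_def]
  have halgmem : ∀ (c : R) (k₁ k₂ : H),
      f (algebraMap R A c) (k₁ * k₂) = f (f (algebraMap R A c) k₂) k₁ := by
    intro c k₁ k₂
    rw [halg, halg, halg, Bialgebra.counit_mul]
    congr 1
    ring
  -- the subalgebra of elements satisfying the associativity identity
  let Sa : Subalgebra R A :=
    { carrier := {a | ∀ k₁ k₂ : H, f a (k₁ * k₂) = f (f a k₂) k₁}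
      mul_mem' := by
        intro x y hx hy
        simp only [Set.mem_setOf_eq] at hx hy ⊢
        intro k₁ k₂
        obtain ⟨S₁, hS₁⟩ := exists_repr (R := R) k₁
        obtain ⟨S₂, hS₂⟩ := exists_repr (R := R) k₂
        have hrep12 : comul (R := R) (k₁ * k₂)
            = ∑ q ∈ S₁ ×ˢ S₂, (q.1.1 * q.2.1) ⊗ₜ[R] (q.1.2 * q.2.2) := by
          rw [Bialgebra.comul_mul, hS₁, hS₂, Finset.sum_mul_sum, Finset.sum_product]
          simp [Algebra.TensorProduct.tmul_mul_tmul]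
        have lhs : f (x * y) (k₁ * k₂)
            = ∑ p ∈ S₂, ∑ q ∈ S₁, f x (q.1 * p.1) * f y (q.2 * p.2) := by
          rw [map_mul f]
          show convMul (f x) (f y) (k₁ * k₂) = _
          rw [convMul_repr hrep12, Finset.sum_product]
          exact Finset.sum_comm
        have rhs : f (f (x * y) k₂) k₁
            = ∑ p ∈ S₂, ∑ q ∈ S₁, f x (q.1 * p.1) * f y (q.2 * p.2) := by
          have e1 : f (x * y) k₂ = ∑ p ∈ S₂, f x p.1 * f y p.2 := by
            rw [map_mul f]
            exact convMul_repr hS₂ (f x) (f y)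
          rw [e1, map_sum, LinearMap.sum_apply]
          refine Finset.sum_congr rfl fun p _ => ?_
          rw [map_mul f]
          show convMul (f (f x p.1)) (f (f y p.2)) k₁ = _
          rw [convMul_repr hS₁]
          exact Finset.sum_congr rfl fun q _ => by rw [hx q.1 p.1, hy q.2 p.2]
        exact lhs.trans rhs.symm
      one_mem' := by
        intro k₁ k₂
        simpa using halgmem 1 k₁ k₂
      add_mem' := by
        intro x y hx hy
        simp only [Set.mem_setOf_eq] at hx hy ⊢
        intro k₁ k₂
        have e : ∀ (a b : A) (k : H), f (a + b) k = f a k + f b k := fun a b k => by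
          rw [map_add f]; rfl
        simp only [e, hx k₁ k₂, hy k₁ k₂]
      zero_mem' := by
        intro k₁ k₂
        have z : ∀ k : H, f 0 k = 0 := fun k => by rw [map_zero f]; rfl
        simp only [z]
      algebraMap_mem' := fun c k₁ k₂ => halgmem c k₁ k₂ }
  have hmemS : ∀ (h : H) (m : M), φ h m ∈ Sa := fun h m => hmem h m
  -- ψ' lands in Sa
  let ψ' : H →ₗ[R] M →ₗ[R] ↥Sa :=
    { toFun := fun h => LinearMap.codRestrict (Subalgebra.toSubmodule Sa) (φ h)
        (fun m => hmemS h m)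
      map_add' := by
        intro h k; ext m
        show φ (h + k) m = φ h m + φ k m
        simp
      map_smul' := by
        intro c h; ext m
        show φ (c • h) m = c • φ h m
        simp }
  have hψ' : Measures R H M (↥Sa) ψ' := by
    constructor
    · intro h
      apply Subtype.ext
      show φ h 1 = _
      rw [hφ.1 h]
      simp
    · intro h m n ι t h₁ h₂ hrep
      apply Subtype.ext
      show φ h (m * n) = _
      rw [hφ.2 h m n ι t h₁ h₂ hrep]
      simp
      rfl
  obtain ⟨g, hg, -⟩ := huniv ⟨↥Sa⟩ ψ' hψ'
  have hvg : Sa.val.comp g = AlgHom.id R A := by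
    refine (hg₀uniq _ ?_).trans (hg₀uniq _ fun _ _ => rfl).symm
    intro h m
    show Sa.val (g (φ h m)) = φ h m
    rw [hg]
    rfl
  have hall : ∀ a : A, ∀ k₁ k₂ : H, f a (k₁ * k₂) = f (f a k₂) k₁ := by
    intro a
    have h2 : (Sa.val.comp g) a = a := by rw [hvg]; rfl
    have h3 : (g a : A) ∈ Sa := (g a).2
    rw [show (a : A) = (g a : A) from h2.symm]
    exact h3
  -- assemble ρ
  let ρ : H →ₗ[R] A →ₗ[R] A :=
    { toFun := fun h =>
        { toFun := fun a => f a h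
          map_add' := fun a b => by rw [map_add f]; rfl
          map_smul' := fun c a => by simp }
      map_add' := fun h k => by ext a; simp
      map_smul' := fun c h => by ext a; simp }
  refine ⟨ρ, ?_, ?_, ?_, ?_, ?_⟩
  · intro h
    show f 1 h = algebraMap R A (counit (R := R) h)
    rw [map_one f]
    rfl
  · intro h a b ι t h₁ h₂ hrep
    show f (a * b) h = _
    rw [map_mul f]
    show convMul (f a) (f b) h = _
    rw [convMul_repr hrep]
    rfl
  · intro h₁ h₂ a
    exact hall a h₁ h₂
  · intro a
    show f a 1 = a
    calc f a 1 = (ev1.comp f) a := rfl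
      _ = a := by rw [hev1]; rfl
  · intro h₁ h₂ m
    show f (φ h₂ m) h₁ = _
    rw [hf]
    rfl
end
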